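/- A tetrahedron is not equiprojective: there exist two directions, neither parallel to any face, such that the orthogonal projections of the tetrahedron along them are polygons with different numbers of vertices (a triangle and a quadrilateral). -/

import Mathlib

/-- A face of a convex polyhedron: a two-dimensional exposed face. -/
def IsFaceOf (P F : Set (EuclideanSpace ℝ (Fin 3))) : Prop :=
  IsExposed ℝ P F ∧ Module.finrank ℝ (vectorSpan ℝ F) = 2

noncomputable def shadow (P : Set (EuclideanSpace ℝ (Fin 3)))
    (d : EuclideanSpace ℝ (Fin 3)) : Set ((ℝ ∙ d)ᗮ : Submodule ℝ _) :=
  (Submodule.orthogonalProjection (ℝ ∙ d)ᗮ) '' P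

def IsKGon {V : Type*} [AddCommGroup V] [Module ℝ V] (k : ℕ) (A : Set V) : Prop :=
  (A.extremePoints ℝ).ncard = k

set_option maxHeartbeats 800000


open Finset

variable {V : Type*} [AddCommGroup V] [Module ℝ V]

lemma mem_conv_range {n : ℕ} {q : Fin n → V} {x : V}
    (hx : x ∈ convexHull ℝ (Set.range q)) :
    ∃ w : Fin n → ℝ, (∀ i, 0 ≤ w i) ∧ ∑ i, w i = 1 ∧ ∑ i, w i • q i = x := by
  classical
  rw [convexHull_range_eq_exists_affineCombination] at hx
  obtain ⟨s, w, hw0, hw1, hx⟩ := hx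
  refine ⟨Set.indicator ↑s w, ?_, ?_, ?_⟩
  · intro i
    by_cases h : i ∈ s
    · simp [Set.indicator, h, hw0 i h]
    · simp [Set.indicator, h]
  · rw [Finset.sum_indicator_subset _ (Finset.subset_univ s)]; exact hw1
  · have h1 : ∑ i, Set.indicator (↑s) w i = 1 := by
      rw [Finset.sum_indicator_subset _ (Finset.subset_univ s)]; exact hw1
    rw [← Finset.univ.affineCombination_eq_linear_combination q _ h1,
      ← Finset.affineCombination_indicator_subset w q (Finset.subset_univ s), hx]

lemma conv_max {n : ℕ} (q : Fin n → V) (f : V →ₗ[ℝ] ℝ) (i0 : Fin n)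
    (h : ∀ i, i ≠ i0 → f (q i) < f (q i0)) :
    ∀ y ∈ convexHull ℝ (Set.range q), f y ≤ f (q i0) ∧ (f y = f (q i0) → y = q i0) := by
  intro y hy
  obtain ⟨w, hw0, hw1, rfl⟩ := mem_conv_range hy
  have hfy : f (∑ i, w i • q i) = ∑ i, w i * f (q i) := by
    rw [map_sum]; simp [smul_eq_mul]
  have hle : ∀ i ∈ Finset.univ, w i * f (q i) ≤ w i * f (q i0) := by
    intro i _
    rcases eq_or_ne i i0 with rfl | hne
    · exact le_rfl
    · exact mul_le_mul_of_nonneg_left (le_of_lt (h i hne)) (hw0 i)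
  have hsum : ∑ i, w i * f (q i0) = f (q i0) := by
    rw [← Finset.sum_mul, hw1, one_mul]
  constructor
  · rw [hfy]
    calc ∑ i, w i * f (q i) ≤ ∑ i, w i * f (q i0) := Finset.sum_le_sum hle
    _ = f (q i0) := hsum
  · intro heq
    rw [hfy] at heq
    have heq' : ∑ i, w i * f (q i) = ∑ i, w i * f (q i0) := by rw [heq, hsum]
    have hall := (Finset.sum_eq_sum_iff_of_le hle).1 heq'
    have hwz : ∀ i, i ≠ i0 → w i = 0 := by
      intro i hne
      have hi := (hall i (Finset.mem_univ i)).symm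
      by_contra hwne
      have hpos : 0 < w i := lt_of_le_of_ne (hw0 i) (Ne.symm hwne)
      have := h i hne
      nlinarith
    have hwi0 : w i0 = 1 := by
      rw [← hw1, Finset.sum_eq_single i0]
      · intro b _ hb; exact hwz b hb
      · intro hb; exact absurd (Finset.mem_univ i0) hb
    rw [Finset.sum_eq_single i0]
    · rw [hwi0, one_smul]
    · intro b _ hb; rw [hwz b hb, zero_smul]
    · intro hb; exact absurd (Finset.mem_univ i0) hb

lemma extreme_of_unique_max {n : ℕ} (q : Fin n → V) (f : V →ₗ[ℝ] ℝ) (i0 : Fin n)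
    (h : ∀ i, i ≠ i0 → f (q i) < f (q i0)) :
    q i0 ∈ (convexHull ℝ (Set.range q)).extremePoints ℝ := by
  have key := conv_max q f i0 h
  refine ⟨subset_convexHull ℝ _ ⟨i0, rfl⟩, ?_⟩
  intro x₁ hx₁ x₂ hx₂ hseg
  obtain ⟨a, b, ha, hb, hab, hsum⟩ := hseg
  have h1 := key x₁ hx₁
  have h2 := key x₂ hx₂
  have hfe : f (q i0) = a * f x₁ + b * f x₂ := by
    rw [← hsum]; simp [smul_eq_mul]
  have e1 : f x₁ = f (q i0) := by
    by_contra hne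
    have hlt : f x₁ < f (q i0) := lt_of_le_of_ne h1.1 hne
    have hm : (a + b) * f (q i0) = f (q i0) := by rw [hab, one_mul]
    have := mul_lt_mul_of_pos_left hlt ha
    have := mul_le_mul_of_nonneg_left h2.1 hb.le
    nlinarith
  have e2 : f x₂ = f (q i0) := by
    by_contra hne
    have hlt : f x₂ < f (q i0) := lt_of_le_of_ne h2.1 hne
    have hm : (a + b) * f (q i0) = f (q i0) := by rw [hab, one_mul]
    have := mul_lt_mul_of_pos_left hlt hb
    have := mul_le_mul_of_nonneg_left h1.1 ha.le
    nlinarith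
  exact h1.2 e1


lemma face_functional (p : Fin 4 → EuclideanSpace ℝ (Fin 3))
    (hind : AffineIndependent ℝ p) {F : Set (EuclideanSpace ℝ (Fin 3))}
    (hF : IsFaceOf (convexHull ℝ (Set.range p)) F) :
    ∃ (l : EuclideanSpace ℝ (Fin 3) →L[ℝ] ℝ) (M : ℝ) (m : Fin 4),
      (∀ v ∈ vectorSpan ℝ F, l v = 0) ∧ l (p m) < M ∧ ∀ i, i ≠ m → l (p i) = M := by
  classical
  obtain ⟨hexp, hdim⟩ := hF
  have hFne : F.Nonempty := by
    rcases Set.eq_empty_or_nonempty F with rfl | h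
    · rw [vectorSpan_empty] at hdim
      simp at hdim
    · exact h
  obtain ⟨l, hl⟩ := hexp hFne
  obtain ⟨x0, hx0⟩ := hFne
  have hx0' := hx0
  rw [hl] at hx0'
  obtain ⟨hx0P, hx0max⟩ := hx0'
  set M := l x0 with hMdef
  have hFP : F ⊆ convexHull ℝ (Set.range p) := by rw [hl]; exact fun x hx => hx.1
  have hvalF : ∀ x ∈ F, l x = M := by
    intro x hx
    have hx' := hx
    rw [hl] at hx'
    exact le_antisymm (hx0max x hx'.1) (hx'.2 x0 hx0P)
  have hker : ∀ v ∈ vectorSpan ℝ F, l v = 0 := by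
    intro v hv
    have hle : vectorSpan ℝ F ≤ LinearMap.ker (l : EuclideanSpace ℝ (Fin 3) →ₗ[ℝ] ℝ) := by
      rw [vectorSpan_def]
      apply Submodule.span_le.2
      rintro _ ⟨x, hx, y, hy, rfl⟩
      simp only [SetLike.mem_coe, LinearMap.mem_ker, vsub_eq_sub, ContinuousLinearMap.coe_coe,
        map_sub]
      rw [hvalF x hx, hvalF y hy, sub_self]
    exact hle hv
  have hple : ∀ i, l (p i) ≤ M :=
    fun i => hx0max (p i) (subset_convexHull ℝ _ (Set.mem_range_self i))
  have hconstP : (∀ i, l (p i) = M) → ∀ z ∈ convexHull ℝ (Set.range p), l z = M := by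
    intro hall z hz
    obtain ⟨w, hw0, hw1, rfl⟩ := mem_conv_range hz
    rw [map_sum]
    simp only [map_smul, smul_eq_mul]
    calc ∑ i, w i * l (p i) = ∑ i, w i * M := by
          refine Finset.sum_congr rfl fun i _ => by rw [hall i]
    _ = M := by rw [← Finset.sum_mul, hw1, one_mul]
  -- vectorSpan of the whole hull has dimension 3
  have hvsconv : ∀ s : Set (EuclideanSpace ℝ (Fin 3)),
      vectorSpan ℝ (convexHull ℝ s) = vectorSpan ℝ s := by
    intro s
    rw [← direction_affineSpan, ← direction_affineSpan ℝ s, affineSpan_convexHull]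
  set T : Finset (Fin 4) := Finset.univ.filter (fun i => l (p i) < M) with hT
  have hTne : T.Nonempty := by
    by_contra hTe
    have hall : ∀ i, l (p i) = M := by
      intro i
      by_contra hne
      have : i ∈ T := Finset.mem_filter.2 ⟨Finset.mem_univ i, lt_of_le_of_ne (hple i) hne⟩
      exact hTe ⟨i, this⟩
    have hFeq : F = convexHull ℝ (Set.range p) := by
      apply Set.Subset.antisymm hFP
      intro x hx
      rw [hl]
      refine ⟨hx, fun y hy => ?_⟩
      rw [hconstP hall x hx, hconstP hall y hy]
    have h3 : Module.finrank ℝ (vectorSpan ℝ (Set.range p)) = 3 :=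
      hind.finrank_vectorSpan (by simp)
    rw [hFeq, hvsconv, h3] at hdim
    norm_num at hdim
  have hTcard : T.card ≤ 1 := by
    by_contra hc
    push_neg at hc
    obtain ⟨i, hi, j, hj, hij⟩ := Finset.one_lt_card.1 hc
    have hiM : l (p i) < M := (Finset.mem_filter.1 hi).2
    have hjM : l (p j) < M := (Finset.mem_filter.1 hj).2
    -- F is contained in the hull of the other two vertices
    have hsub : F ⊆ convexHull ℝ (p '' ↑(Finset.univ \ ({i, j} : Finset (Fin 4)))) := by
      intro x hx
      have hxM := hvalF x hx
      obtain ⟨w, hw0, hw1, hxe⟩ := mem_conv_range (hFP hx)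
      have hle : ∀ k ∈ Finset.univ, w k * l (p k) ≤ w k * M :=
        fun k _ => mul_le_mul_of_nonneg_left (hple k) (hw0 k)
      have heq : ∑ k, w k * l (p k) = ∑ k, w k * M := by
        have h1 : ∑ k, w k * l (p k) = l x := by
          rw [← hxe, map_sum]; simp only [map_smul, smul_eq_mul]
        have h2 : ∑ k, w k * M = M := by rw [← Finset.sum_mul, hw1, one_mul]
        rw [h1, h2, hxM]
      have hall := (Finset.sum_eq_sum_iff_of_le hle).1 heq
      have hwz : ∀ k, l (p k) < M → w k = 0 := by
        intro k hk
        have := (hall k (Finset.mem_univ k)).symm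
        by_contra hwne
        have hpos : 0 < w k := lt_of_le_of_ne (hw0 k) (Ne.symm hwne)
        nlinarith
      have hwi : w i = 0 := hwz i hiM
      have hwj : w j = 0 := hwz j hjM
      have hzero : ∀ k ∈ Finset.univ, k ∉ Finset.univ \ ({i, j} : Finset (Fin 4)) →
          w k • p k = 0 := by
        intro k _ hk
        simp only [Finset.mem_sdiff, Finset.mem_univ, true_and, not_not,
          Finset.mem_insert, Finset.mem_singleton] at hk
        rcases hk with rfl | rfl
        · rw [hwi, zero_smul]
        · rw [hwj, zero_smul]
      have hzero' : ∀ k ∈ Finset.univ, k ∉ Finset.univ \ ({i, j} : Finset (Fin 4)) →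
          w k = 0 := by
        intro k _ hk
        simp only [Finset.mem_sdiff, Finset.mem_univ, true_and, not_not,
          Finset.mem_insert, Finset.mem_singleton] at hk
        rcases hk with rfl | rfl
        · exact hwi
        · exact hwj
      have hsum1 : ∑ k ∈ Finset.univ \ ({i, j} : Finset (Fin 4)), w k = 1 := by
        rw [Finset.sum_subset (Finset.subset_univ _) hzero']
        exact hw1
      have hxe' : (Finset.univ \ ({i, j} : Finset (Fin 4))).centerMass w p = x := by
        rw [Finset.centerMass_eq_of_sum_1 _ _ hsum1]
        rw [Finset.sum_subset (Finset.subset_univ _) hzero]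
        exact hxe
      rw [← hxe']
      exact Finset.centerMass_mem_convexHull _ (fun k _ => hw0 k) (by rw [hsum1]; norm_num)
        (fun k hk => Set.mem_image_of_mem p (Finset.mem_coe.2 hk))
    have hcard2 : (Finset.univ \ ({i, j} : Finset (Fin 4))).card = 1 + 1 := by
      rw [Finset.card_sdiff_of_subset (Finset.subset_univ _), Finset.card_pair hij]
      simp
    have hle1 : Module.finrank ℝ (vectorSpan ℝ F) ≤ 1 := by
      have h1 : vectorSpan ℝ F ≤
          vectorSpan ℝ (p '' ↑(Finset.univ \ ({i, j} : Finset (Fin 4)))) := by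
        calc vectorSpan ℝ F
            ≤ vectorSpan ℝ (convexHull ℝ (p '' ↑(Finset.univ \ ({i, j} : Finset (Fin 4))))) :=
              vectorSpan_mono ℝ hsub
          _ = _ := hvsconv _
      have h2 := Submodule.finrank_mono h1
      have h3 := finrank_vectorSpan_image_finset_le ℝ p
        (Finset.univ \ ({i, j} : Finset (Fin 4))) hcard2
      rw [Finset.coe_image] at h3
      exact le_trans h2 h3
    rw [hdim] at hle1
    norm_num at hle1
  obtain ⟨m, hm⟩ := Finset.card_eq_one.1 (le_antisymm hTcard hTne.card_pos)
  refine ⟨l, M, m, hker, ?_, ?_⟩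
  · have : m ∈ T := by rw [hm]; exact Finset.mem_singleton_self m
    exact (Finset.mem_filter.1 this).2
  · intro i hi
    have : i ∉ T := by rw [hm]; simpa using hi
    have hnotlt : ¬ l (p i) < M := fun hlt =>
      this (Finset.mem_filter.2 ⟨Finset.mem_univ i, hlt⟩)
    exact le_antisymm (hple i) (not_lt.1 hnotlt)

section Config

variable {W : Type*} [AddCommGroup W] [Module ℝ W]

lemma pair_comb (u w : W) (hli : LinearIndependent ℝ ![u, w]) :
    ∀ a b : ℝ, a • u + b • w = 0 → a = 0 ∧ b = 0 := by
  intro a b hab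
  have h := Fintype.linearIndependent_iff.1 hli ![a, b]
    (by simpa [Fin.sum_univ_two] using hab)
  exact ⟨h 0, h 1⟩

lemma tri_card (hW : Module.finrank ℝ W = 2) (q : Fin 4 → W) (u w : W)
    (hq1 : q 1 = q 0 + u) (hq2 : q 2 = q 0 + w)
    (hq3 : q 3 = q 0 + (3:ℝ)⁻¹ • (u + w))
    (hli : LinearIndependent ℝ ![u, w]) :
    ((convexHull ℝ (Set.range q)).extremePoints ℝ).ncard = 3 := by
  have hcomb := pair_comb u w hli
  have hb : Fintype.card (Fin 2) = Module.finrank ℝ W := by simp [hW]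
  set b := basisOfLinearIndependentOfCardEqFinrank hli hb with hbdef
  have hbc : ⇑b = ![u, w] := coe_basisOfLinearIndependentOfCardEqFinrank hli hb
  have hbu : b 0 = u := by rw [hbc]; rfl
  have hbw : b 1 = w := by rw [hbc]; rfl
  have hf0u : b.coord 0 u = 1 := by rw [← hbu, Module.Basis.coord_apply, b.repr_self]; simp
  have hf0w : b.coord 0 w = 0 := by rw [← hbw, Module.Basis.coord_apply, b.repr_self]; simp
  have hf1u : b.coord 1 u = 0 := by rw [← hbu, Module.Basis.coord_apply, b.repr_self]; simp
  have hf1w : b.coord 1 w = 1 := by rw [← hbw, Module.Basis.coord_apply, b.repr_self]; simp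
  have hval : ∀ f : W →ₗ[ℝ] ℝ, f (q 1) = f (q 0) + f u ∧ f (q 2) = f (q 0) + f w ∧
      f (q 3) = f (q 0) + (3:ℝ)⁻¹ * (f u + f w) := by
    intro f
    refine ⟨by rw [hq1, map_add], by rw [hq2, map_add], ?_⟩
    rw [hq3, map_add, map_smul, map_add, smul_eq_mul]
  -- q 0, q 1, q 2 are extreme
  have hex0 : q 0 ∈ (convexHull ℝ (Set.range q)).extremePoints ℝ := by
    apply extreme_of_unique_max q (-(b.coord 0) - (b.coord 1)) 0
    intro i hi
    obtain ⟨h1, h2, h3⟩ := hval (-(b.coord 0) - (b.coord 1))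
    have hu : (-(b.coord 0) - (b.coord 1)) u = -1 := by
      simp [LinearMap.sub_apply, hf0u, hf1u]
    have hw' : (-(b.coord 0) - (b.coord 1)) w = -1 := by
      simp [LinearMap.sub_apply, hf0w, hf1w]
    rcases (by omega : i = 1 ∨ i = 2 ∨ i = 3) with rfl | rfl | rfl
    · rw [h1, hu]; linarith
    · rw [h2, hw']; linarith
    · rw [h3, hu, hw']; norm_num
  have hex1 : q 1 ∈ (convexHull ℝ (Set.range q)).extremePoints ℝ := by
    apply extreme_of_unique_max q (b.coord 0) 1
    intro i hi
    obtain ⟨h1, h2, h3⟩ := hval (b.coord 0)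
    rcases (by omega : i = 0 ∨ i = 2 ∨ i = 3) with rfl | rfl | rfl
    · rw [h1, hf0u]; linarith
    · rw [h1, h2, hf0u, hf0w]; linarith
    · rw [h1, h3, hf0u, hf0w]; norm_num
  have hex2 : q 2 ∈ (convexHull ℝ (Set.range q)).extremePoints ℝ := by
    apply extreme_of_unique_max q (b.coord 1) 2
    intro i hi
    obtain ⟨h1, h2, h3⟩ := hval (b.coord 1)
    rcases (by omega : i = 0 ∨ i = 1 ∨ i = 3) with rfl | rfl | rfl
    · rw [h2, hf1w]; linarith
    · rw [h2, h1, hf1w, hf1u]; linarith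
    · rw [h2, h3, hf1u, hf1w]; norm_num
  -- q 3 is not extreme
  have hne03 : q 0 ≠ q 3 := by
    rw [hq3]
    intro h
    have h' : (3:ℝ)⁻¹ • (u + w) = 0 := by
      have := h.symm
      rwa [add_eq_left] at this
    have h'' : (3:ℝ)⁻¹ • u + (3:ℝ)⁻¹ • w = 0 := by rwa [smul_add] at h'
    have := (hcomb _ _ h'').1
    norm_num at this
  have hnex3 : q 3 ∉ (convexHull ℝ (Set.range q)).extremePoints ℝ := by
    intro hext
    have hm : (1/2 : ℝ) • q 1 + (1/2 : ℝ) • q 2 ∈ convexHull ℝ (Set.range q) :=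
      (convex_convexHull ℝ (Set.range q))
        (subset_convexHull ℝ _ (Set.mem_range_self 1))
        (subset_convexHull ℝ _ (Set.mem_range_self 2))
        (by norm_num) (by norm_num) (by norm_num)
    have hseg : q 3 ∈ openSegment ℝ (q 0) ((1/2 : ℝ) • q 1 + (1/2 : ℝ) • q 2) := by
      rw [openSegment]
      refine ⟨1/3, 2/3, by norm_num, by norm_num, by norm_num, ?_⟩
      rw [hq1, hq2, hq3]
      match_scalars <;> norm_num
    exact hne03 (hext.2 (subset_convexHull ℝ _ (Set.mem_range_self 0)) hm hseg)
  -- distinctness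
  have hu0 : u ≠ 0 := fun h => by
    have := (hcomb 1 0 (by rw [h]; simp)).1; norm_num at this
  have hw0 : w ≠ 0 := fun h => by
    have := (hcomb 0 1 (by rw [h]; simp)).2; norm_num at this
  have huw : u ≠ w := fun h => by
    have := (hcomb 1 (-1) (by rw [h]; simp)).1; norm_num at this
  have hne01 : q 0 ≠ q 1 := by
    rw [hq1]; intro h; exact hu0 (by rw [left_eq_add] at h; exact h)
  have hne02 : q 0 ≠ q 2 := by
    rw [hq2]; intro h; exact hw0 (by rw [left_eq_add] at h; exact h)
  have hne12 : q 1 ≠ q 2 := by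
    rw [hq1, hq2]; intro h; exact huw (add_left_cancel h)
  -- the set of extreme points
  have hEP : (convexHull ℝ (Set.range q)).extremePoints ℝ = {q 0, q 1, q 2} := by
    apply Set.Subset.antisymm
    · intro x hx
      obtain ⟨i, rfl⟩ := extremePoints_convexHull_subset hx
      rcases (by omega : i = 0 ∨ i = 1 ∨ i = 2 ∨ i = 3) with rfl | rfl | rfl | rfl
      · exact Set.mem_insert _ _
      · exact Set.mem_insert_of_mem _ (Set.mem_insert _ _)
      · exact Set.mem_insert_of_mem _ (Set.mem_insert_of_mem _ rfl)
      · exact absurd hx hnex3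
    · rintro x (rfl | rfl | rfl)
      exacts [hex0, hex1, hex2]
  rw [hEP]
  rw [Set.ncard_insert_of_notMem (by simp [hne01, hne02]) (Set.toFinite _),
    Set.ncard_pair hne12]

end Config

section Config2

variable {W : Type*} [AddCommGroup W] [Module ℝ W]

lemma quad_card (hW : Module.finrank ℝ W = 2) (q : Fin 4 → W) (u w : W)
    (hq1 : q 1 = q 0 + u) (hq2 : q 2 = q 0 + w)
    (hq3 : q 3 = q 0 + u - w)
    (hli : LinearIndependent ℝ ![u, w]) :
    ((convexHull ℝ (Set.range q)).extremePoints ℝ).ncard = 4 := by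
  have hcomb := pair_comb u w hli
  have hb : Fintype.card (Fin 2) = Module.finrank ℝ W := by simp [hW]
  set b := basisOfLinearIndependentOfCardEqFinrank hli hb with hbdef
  have hbc : ⇑b = ![u, w] := coe_basisOfLinearIndependentOfCardEqFinrank hli hb
  have hbu : b 0 = u := by rw [hbc]; rfl
  have hbw : b 1 = w := by rw [hbc]; rfl
  have hf0u : b.coord 0 u = 1 := by rw [← hbu, Module.Basis.coord_apply, b.repr_self]; simp
  have hf0w : b.coord 0 w = 0 := by rw [← hbw, Module.Basis.coord_apply, b.repr_self]; simp
  have hf1u : b.coord 1 u = 0 := by rw [← hbu, Module.Basis.coord_apply, b.repr_self]; simp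
  have hf1w : b.coord 1 w = 1 := by rw [← hbw, Module.Basis.coord_apply, b.repr_self]; simp
  have hval : ∀ f : W →ₗ[ℝ] ℝ, f (q 1) = f (q 0) + f u ∧ f (q 2) = f (q 0) + f w ∧
      f (q 3) = f (q 0) + f u - f w := by
    intro f
    refine ⟨by rw [hq1, map_add], by rw [hq2, map_add], ?_⟩
    rw [hq3, map_sub, map_add]
  have hex0 : q 0 ∈ (convexHull ℝ (Set.range q)).extremePoints ℝ := by
    apply extreme_of_unique_max q (-((2:ℝ) • b.coord 0) - b.coord 1) 0
    intro i hi
    obtain ⟨h1, h2, h3⟩ := hval (-((2:ℝ) • b.coord 0) - b.coord 1)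
    have hu : (-((2:ℝ) • b.coord 0) - b.coord 1) u = -2 := by
      simp [LinearMap.sub_apply, LinearMap.smul_apply, hf0u, hf1u]
    have hw' : (-((2:ℝ) • b.coord 0) - b.coord 1) w = -1 := by
      simp [LinearMap.sub_apply, LinearMap.smul_apply, hf0w, hf1w]
    rcases (by omega : i = 1 ∨ i = 2 ∨ i = 3) with rfl | rfl | rfl
    · rw [h1, hu]; linarith
    · rw [h2, hw']; linarith
    · rw [h3, hu, hw']; linarith
  have hex1 : q 1 ∈ (convexHull ℝ (Set.range q)).extremePoints ℝ := by
    apply extreme_of_unique_max q ((2:ℝ) • b.coord 0 + b.coord 1) 1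
    intro i hi
    obtain ⟨h1, h2, h3⟩ := hval ((2:ℝ) • b.coord 0 + b.coord 1)
    have hu : ((2:ℝ) • b.coord 0 + b.coord 1) u = 2 := by
      simp [LinearMap.add_apply, LinearMap.smul_apply, hf0u, hf1u]
    have hw' : ((2:ℝ) • b.coord 0 + b.coord 1) w = 1 := by
      simp [LinearMap.add_apply, LinearMap.smul_apply, hf0w, hf1w]
    rcases (by omega : i = 0 ∨ i = 2 ∨ i = 3) with rfl | rfl | rfl
    · rw [h1, hu]; linarith
    · rw [h1, h2, hu, hw']; linarith
    · rw [h1, h3, hu, hw']; linarith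
  have hex2 : q 2 ∈ (convexHull ℝ (Set.range q)).extremePoints ℝ := by
    apply extreme_of_unique_max q (b.coord 1) 2
    intro i hi
    obtain ⟨h1, h2, h3⟩ := hval (b.coord 1)
    rcases (by omega : i = 0 ∨ i = 1 ∨ i = 3) with rfl | rfl | rfl
    · rw [h2, hf1w]; linarith
    · rw [h2, h1, hf1w, hf1u]; linarith
    · rw [h2, h3, hf1u, hf1w]; linarith
  have hex3 : q 3 ∈ (convexHull ℝ (Set.range q)).extremePoints ℝ := by
    apply extreme_of_unique_max q (b.coord 0 - b.coord 1) 3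
    intro i hi
    obtain ⟨h1, h2, h3⟩ := hval (b.coord 0 - b.coord 1)
    have hu : (b.coord 0 - b.coord 1) u = 1 := by
      simp [LinearMap.sub_apply, hf0u, hf1u]
    have hw' : (b.coord 0 - b.coord 1) w = -1 := by
      simp [LinearMap.sub_apply, hf0w, hf1w]
    rcases (by omega : i = 0 ∨ i = 1 ∨ i = 2) with rfl | rfl | rfl
    · rw [h3, hu, hw']; linarith
    · rw [h1, h3, hu, hw']; linarith
    · rw [h2, h3, hu, hw']; linarith
  -- distinctness
  have hu0 : u ≠ 0 := fun h => by
    have := (hcomb 1 0 (by rw [h]; simp)).1; norm_num at this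
  have hw0 : w ≠ 0 := fun h => by
    have := (hcomb 0 1 (by rw [h]; simp)).2; norm_num at this
  have huw : u ≠ w := fun h => by
    have := (hcomb 1 (-1) (by rw [h]; simp)).1; norm_num at this
  have hu2w : u ≠ (2:ℝ) • w := fun h => by
    have := (hcomb 1 (-2) (by rw [h]; match_scalars <;> norm_num)).1; norm_num at this
  have hne01 : q 0 ≠ q 1 := by
    rw [hq1]; intro h; exact hu0 (by rw [left_eq_add] at h; exact h)
  have hne02 : q 0 ≠ q 2 := by
    rw [hq2]; intro h; exact hw0 (by rw [left_eq_add] at h; exact h)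
  have hne12 : q 1 ≠ q 2 := by
    rw [hq1, hq2]; intro h; exact huw (add_left_cancel h)
  have hne03 : q 0 ≠ q 3 := by
    rw [hq3]; intro h
    apply huw
    have h' : q 0 + (u - w) = q 0 := by rw [add_sub_assoc] at h; exact h.symm
    have : u - w = 0 := by
      have := h'
      rwa [add_eq_left] at this
    exact sub_eq_zero.1 this
  have hne13 : q 1 ≠ q 3 := by
    rw [hq1, hq3]; intro h
    apply hw0
    have : q 0 + u - w = q 0 + u := h.symm
    have h2' : (q 0 + u) - w = (q 0 + u) := this
    have := sub_eq_self.1 h2'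
    exact this
  have hne23 : q 2 ≠ q 3 := by
    rw [hq2, hq3]; intro h
    apply hu2w
    have hw' : w = u - w := add_left_cancel (by rw [add_sub_assoc] at h; exact h)
    exact (sub_eq_iff_eq_add.1 hw'.symm).trans (two_smul ℝ w).symm
  have hEP : (convexHull ℝ (Set.range q)).extremePoints ℝ = {q 0, q 1, q 2, q 3} := by
    apply Set.Subset.antisymm
    · intro x hx
      obtain ⟨i, rfl⟩ := extremePoints_convexHull_subset hx
      rcases (by omega : i = 0 ∨ i = 1 ∨ i = 2 ∨ i = 3) with rfl | rfl | rfl | rfl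
      · exact Set.mem_insert _ _
      · exact Set.mem_insert_of_mem _ (Set.mem_insert _ _)
      · exact Set.mem_insert_of_mem _ (Set.mem_insert_of_mem _ (Set.mem_insert _ _))
      · exact Set.mem_insert_of_mem _ (Set.mem_insert_of_mem _
          (Set.mem_insert_of_mem _ rfl))
    · rintro x (rfl | rfl | rfl | rfl)
      exacts [hex0, hex1, hex2, hex3]
  rw [hEP]
  rw [Set.ncard_insert_of_notMem (by simp [hne01, hne02, hne03]) (Set.toFinite _),
    Set.ncard_insert_of_notMem (by simp [hne12, hne13]) (Set.toFinite _),
    Set.ncard_pair hne23]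

end Config2


lemma dir_not_in_face (p : Fin 4 → EuclideanSpace ℝ (Fin 3))
    (hind : AffineIndependent ℝ p) (c : Fin 4 → ℝ) (hc0 : ∑ i, c i = 0)
    (hcnz : ∀ i, c i ≠ 0) {F : Set (EuclideanSpace ℝ (Fin 3))}
    (hF : IsFaceOf (convexHull ℝ (Set.range p)) F) :
    (∑ i, c i • p i) ∉ vectorSpan ℝ F := by
  intro hd
  obtain ⟨l, M, m, hker, hlt, heq⟩ := face_functional p hind hF
  have h0 : l (∑ i, c i • p i) = 0 := hker _ hd
  have hval : l (∑ i, c i • p i) = ∑ i, c i * l (p i) := by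
    rw [map_sum]; simp only [map_smul, smul_eq_mul]
  have hsplit : ∑ i, c i * l (p i) - ∑ i, c i * M = c m * (l (p m) - M) := by
    rw [← Finset.sum_sub_distrib, Finset.sum_eq_single m]
    · ring
    · intro b _ hb; rw [heq b hb]; ring
    · intro hmem; exact absurd (Finset.mem_univ m) hmem
  have hM0 : ∑ i, c i * M = 0 := by rw [← Finset.sum_mul, hc0, zero_mul]
  have hzero : c m * (l (p m) - M) = 0 := by
    rw [← hsplit, hM0, sub_zero, ← hval, h0]
  exact mul_ne_zero (hcnz m) (sub_ne_zero_of_ne (ne_of_lt hlt)) hzero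

lemma comb_zero_weights (p : Fin 4 → EuclideanSpace ℝ (Fin 3))
    (hind : AffineIndependent ℝ p) (c : Fin 4 → ℝ) (hc0 : ∑ i, c i = 0)
    (hsum : ∑ i, c i • p i = 0) : ∀ i, c i = 0 := by
  intro i
  refine (affineIndependent_iff_of_fintype ℝ p).1 hind c hc0 ?_ i
  rw [Finset.weightedVSub_eq_linear_combination _ hc0]
  exact hsum

lemma shadow_eq (p : Fin 4 → EuclideanSpace ℝ (Fin 3)) (d : EuclideanSpace ℝ (Fin 3)) :
    shadow (convexHull ℝ (Set.range p)) d =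
      convexHull ℝ (Set.range fun i => (Submodule.orthogonalProjection (ℝ ∙ d)ᗮ) (p i)) := by
  unfold _root_.shadow
  rw [show ⇑(Submodule.orthogonalProjection (ℝ ∙ d)ᗮ) =
    ⇑((Submodule.orthogonalProjection (ℝ ∙ d)ᗮ : _ →L[ℝ] _) :
      EuclideanSpace ℝ (Fin 3) →ₗ[ℝ] ((ℝ ∙ d)ᗮ : Submodule ℝ _)) from rfl,
    LinearMap.image_convexHull, ← Set.range_comp]
  rfl

lemma proj_self_zero (d : EuclideanSpace ℝ (Fin 3)) :
    (Submodule.orthogonalProjection (ℝ ∙ d)ᗮ) d = 0 := by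
  rw [Submodule.orthogonalProjectionOnto_eq_zero_iff]
  exact (ℝ ∙ d).le_orthogonal_orthogonal (Submodule.mem_span_singleton_self d)

lemma proj_ker {d x : EuclideanSpace ℝ (Fin 3)}
    (h : (Submodule.orthogonalProjection (ℝ ∙ d)ᗮ) x = 0) : ∃ t : ℝ, x = t • d := by
  have hx : x ∈ ((ℝ ∙ d)ᗮ)ᗮ := Submodule.orthogonalProjectionOnto_eq_zero_iff.1 h
  rw [Submodule.orthogonal_orthogonal] at hx
  obtain ⟨t, ht⟩ := Submodule.mem_span_singleton.1 hx
  exact ⟨t, ht.symm⟩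

lemma finrank_perp {d : EuclideanSpace ℝ (Fin 3)} (hd : d ≠ 0) :
    Module.finrank ℝ ((ℝ ∙ d)ᗮ : Submodule ℝ _) = 2 := by
  have h := Submodule.finrank_add_finrank_orthogonal (K := ℝ ∙ d)
  rw [finrank_span_singleton hd] at h
  have h3 : Module.finrank ℝ (EuclideanSpace ℝ (Fin 3)) = 3 := finrank_euclideanSpace_fin
  omega

/-- A tetrahedron is not equiprojective: there are two directions, neither parallel
to any face, whose shadows are respectively a triangle and a quadrilateral. -/
theorem stmt_9 (p : Fin 4 → EuclideanSpace ℝ (Fin 3))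
    (hind : AffineIndependent ℝ p)
    (P : Set (EuclideanSpace ℝ (Fin 3)))
    (hP : P = convexHull ℝ (Set.range p)) :
    ∃ d₁ d₂ : EuclideanSpace ℝ (Fin 3), d₁ ≠ 0 ∧ d₂ ≠ 0 ∧
      (∀ F, IsFaceOf P F → d₁ ∉ vectorSpan ℝ F) ∧
      (∀ F, IsFaceOf P F → d₂ ∉ vectorSpan ℝ F) ∧
      IsKGon 3 (shadow P d₁) ∧ IsKGon 4 (shadow P d₂) := by
  classical
  subst hP
  set c₁ : Fin 4 → ℝ := ![3⁻¹, 3⁻¹, 3⁻¹, -1] with hc₁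
  set c₂ : Fin 4 → ℝ := ![1, 1, -1, -1] with hc₂
  have hc₁0 : ∑ i, c₁ i = 0 := by norm_num [hc₁, Fin.sum_univ_four, Matrix.cons_val_two, Matrix.tail_cons, Matrix.head_cons, Matrix.cons_val_three]
  have hc₂0 : ∑ i, c₂ i = 0 := by norm_num [hc₂, Fin.sum_univ_four, Matrix.cons_val_two, Matrix.tail_cons, Matrix.head_cons, Matrix.cons_val_three]
  have hc₁nz : ∀ i, c₁ i ≠ 0 := by
    intro i
    rcases (by omega : i = 0 ∨ i = 1 ∨ i = 2 ∨ i = 3) with rfl | rfl | rfl | rfl <;>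
      norm_num [hc₁, Matrix.cons_val_two, Matrix.tail_cons, Matrix.head_cons, Matrix.cons_val_three]
  have hc₂nz : ∀ i, c₂ i ≠ 0 := by
    intro i
    rcases (by omega : i = 0 ∨ i = 1 ∨ i = 2 ∨ i = 3) with rfl | rfl | rfl | rfl <;>
      norm_num [hc₂, Matrix.cons_val_two, Matrix.tail_cons, Matrix.head_cons, Matrix.cons_val_three]
  set d₁ : EuclideanSpace ℝ (Fin 3) := ∑ i, c₁ i • p i with hd₁
  set d₂ : EuclideanSpace ℝ (Fin 3) := ∑ i, c₂ i • p i with hd₂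
  have hd₁exp : d₁ = (3:ℝ)⁻¹ • p 0 + (3:ℝ)⁻¹ • p 1 + (3:ℝ)⁻¹ • p 2 - p 3 := by
    rw [hd₁]
    simp [Fin.sum_univ_four, hc₁, sub_eq_add_neg]
  have hd₂exp : d₂ = p 0 + p 1 - p 2 - p 3 := by
    rw [hd₂]
    simp [Fin.sum_univ_four, hc₂, sub_eq_add_neg]
  have hd₁ne : d₁ ≠ 0 := by
    intro h
    have := comb_zero_weights p hind c₁ hc₁0 (hd₁ ▸ h) 3
    norm_num [hc₁, Matrix.cons_val_two, Matrix.tail_cons, Matrix.head_cons, Matrix.cons_val_three] at this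
  have hd₂ne : d₂ ≠ 0 := by
    intro h
    have := comb_zero_weights p hind c₂ hc₂0 (hd₂ ▸ h) 3
    norm_num [hc₂, Matrix.cons_val_two, Matrix.tail_cons, Matrix.head_cons, Matrix.cons_val_three] at this
  refine ⟨d₁, d₂, hd₁ne, hd₂ne,
    fun F hF => dir_not_in_face p hind c₁ hc₁0 hc₁nz hF,
    fun F hF => dir_not_in_face p hind c₂ hc₂0 hc₂nz hF, ?_, ?_⟩
  -- triangle shadow
  · show ((shadow (convexHull ℝ (Set.range p)) d₁).extremePoints ℝ).ncard = 3
    rw [shadow_eq p d₁]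
    set π := Submodule.orthogonalProjection (ℝ ∙ d₁)ᗮ with hπdef
    set q : Fin 4 → ((ℝ ∙ d₁)ᗮ : Submodule ℝ _) := fun i => π (p i) with hq
    have hπ0 : π d₁ = 0 := proj_self_zero d₁
    have hrel : ((3:ℝ)⁻¹ • q 0 + (3:ℝ)⁻¹ • q 1 + (3:ℝ)⁻¹ • q 2) - q 3 = 0 := by
      have h : π ((3:ℝ)⁻¹ • p 0 + (3:ℝ)⁻¹ • p 1 + (3:ℝ)⁻¹ • p 2 - p 3) = 0 := by
        rw [← hd₁exp]; exact hπ0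
      rw [map_sub, map_add, map_add, map_smul, map_smul, map_smul] at h
      exact h
    have hq3 : q 3 = q 0 + (3:ℝ)⁻¹ • ((q 1 - q 0) + (q 2 - q 0)) := by
      rw [← (sub_eq_zero.1 hrel)]
      match_scalars <;> ring
    have hli : LinearIndependent ℝ ![q 1 - q 0, q 2 - q 0] := by
      rw [Fintype.linearIndependent_iff]
      intro g hg
      have hg' : π (g 0 • (p 1 - p 0) + g 1 • (p 2 - p 0)) = 0 := by
        rw [map_add, map_smul, map_smul, map_sub, map_sub]
        simpa [Fin.sum_univ_two] using hg
      obtain ⟨t, ht⟩ := proj_ker hg'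
      set e : Fin 4 → ℝ := ![-(g 0) - g 1 - t * 3⁻¹, g 0 - t * 3⁻¹, g 1 - t * 3⁻¹, t] with he
      have he0 : ∑ i, e i = 0 := by norm_num [he, Fin.sum_univ_four, Matrix.cons_val_two, Matrix.tail_cons, Matrix.head_cons, Matrix.cons_val_three]; ring
      have hw : ∑ i, e i • p i = 0 := by
        have hsub : (g 0 • (p 1 - p 0) + g 1 • (p 2 - p 0)) - t • d₁ = 0 :=
          sub_eq_zero.2 ht
        rw [hd₁exp] at hsub
        rw [show (∑ i, e i • p i) =
          (g 0 • (p 1 - p 0) + g 1 • (p 2 - p 0)) -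
            t • ((3:ℝ)⁻¹ • p 0 + (3:ℝ)⁻¹ • p 1 + (3:ℝ)⁻¹ • p 2 - p 3) from by
          simp only [Fin.sum_univ_four, he, Matrix.cons_val_zero, Matrix.cons_val_one,
            Matrix.head_cons, Matrix.cons_val_two, Matrix.tail_cons, Matrix.cons_val_three]
          match_scalars <;> ring]
        exact hsub
      have hz := comb_zero_weights p hind e he0 hw
      have ht0 : t = 0 := by have := hz 3; simpa [he] using this
      refine Fin.forall_fin_two.2 ⟨?_, ?_⟩
      · have := hz 1; rw [he] at this; simp at this; linarith [this]
      · have := hz 2; rw [he] at this; simp at this; linarith [this]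
    exact tri_card (finrank_perp hd₁ne) q (q 1 - q 0) (q 2 - q 0)
      (by abel) (by abel) hq3 hli
  -- quadrilateral shadow
  · show ((shadow (convexHull ℝ (Set.range p)) d₂).extremePoints ℝ).ncard = 4
    rw [shadow_eq p d₂]
    set π := Submodule.orthogonalProjection (ℝ ∙ d₂)ᗮ with hπdef
    set q : Fin 4 → ((ℝ ∙ d₂)ᗮ : Submodule ℝ _) := fun i => π (p i) with hq
    have hπ0 : π d₂ = 0 := proj_self_zero d₂
    have hrel : ((q 0 + q 1) - q 2) - q 3 = 0 := by
      have h : π (p 0 + p 1 - p 2 - p 3) = 0 := by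
        rw [← hd₂exp]; exact hπ0
      rw [map_sub, map_sub, map_add] at h
      exact h
    have hq3 : q 3 = q 0 + (q 1 - q 0) - (q 2 - q 0) := by
      rw [← (sub_eq_zero.1 hrel)]
      match_scalars <;> ring
    have hli : LinearIndependent ℝ ![q 1 - q 0, q 2 - q 0] := by
      rw [Fintype.linearIndependent_iff]
      intro g hg
      have hg' : π (g 0 • (p 1 - p 0) + g 1 • (p 2 - p 0)) = 0 := by
        rw [map_add, map_smul, map_smul, map_sub, map_sub]
        simpa [Fin.sum_univ_two] using hg
      obtain ⟨t, ht⟩ := proj_ker hg'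
      set e : Fin 4 → ℝ := ![-(g 0) - g 1 - t, g 0 - t, g 1 + t, t] with he
      have he0 : ∑ i, e i = 0 := by norm_num [he, Fin.sum_univ_four, Matrix.cons_val_two, Matrix.tail_cons, Matrix.head_cons, Matrix.cons_val_three]; ring
      have hw : ∑ i, e i • p i = 0 := by
        have hsub : (g 0 • (p 1 - p 0) + g 1 • (p 2 - p 0)) - t • d₂ = 0 :=
          sub_eq_zero.2 ht
        rw [hd₂exp] at hsub
        rw [show (∑ i, e i • p i) =
          (g 0 • (p 1 - p 0) + g 1 • (p 2 - p 0)) - t • (p 0 + p 1 - p 2 - p 3) from by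
          simp only [Fin.sum_univ_four, he, Matrix.cons_val_zero, Matrix.cons_val_one,
            Matrix.head_cons, Matrix.cons_val_two, Matrix.tail_cons, Matrix.cons_val_three]
          match_scalars <;> ring]
        exact hsub
      have hz := comb_zero_weights p hind e he0 hw
      have ht0 : t = 0 := by have := hz 3; simpa [he] using this
      refine Fin.forall_fin_two.2 ⟨?_, ?_⟩
      · have := hz 1; rw [he] at this; simp at this; linarith [this]
      · have := hz 2; rw [he] at this; simp at this; linarith [this]
    exact quad_card (finrank_perp hd₂ne) q (q 1 - q 0) (q 2 - q 0)
      (by abel) (by abel) hq3 hli
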